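/- For θ ∈ (0,1] and n ≥ 1, define the adapted time-net τ_n^θ = (t_{i,n}^θ)_{i=0}^n on [0,T] by t_{i,n}^θ := T(1 - (1 - i/n)^{1/θ}). Then the θ-mesh size ‖τ_n^θ‖_θ := max_{1≤i≤n} (t_{i,n}^θ - t_{i-1,n}^θ)/(T - t_{i-1,n}^θ)^{1-θ} satisfies T^θ/n ≤ ‖τ_n^θ‖_θ ≤ T^θ/(θ n). -/

import Mathlib

private lemma aux_lower (a b p : ℝ) (hb : 0 ≤ b) (hba : b ≤ a) (ha : 0 < a) (hp : 1 ≤ p) :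
    a ^ (p - 1) * (a - b) ≤ a ^ p - b ^ p := by
  have h1 : b ^ p ≤ a ^ (p - 1) * b := by
    calc b ^ p = b ^ (p - 1) * b := by
          rw [← Real.rpow_add_one' (by linarith) (by linarith)]
          ring_nf
      _ ≤ a ^ (p - 1) * b :=
          mul_le_mul_of_nonneg_right (Real.rpow_le_rpow hb hba (by linarith)) hb
  have h2 : a ^ (p - 1) * a = a ^ p := by
    rw [← Real.rpow_add_one ha.ne']
    ring_nf
  nlinarith [h1, h2]

private lemma aux_upper (a b p : ℝ) (hb : 0 ≤ b) (hba : b < a) (hp : 1 ≤ p) :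
    a ^ p - b ^ p ≤ p * a ^ (p - 1) * (a - b) := by
  obtain ⟨c, hc, hder⟩ := exists_hasDerivAt_eq_slope (fun x => x ^ p)
    (fun x => p * x ^ (p - 1)) hba
    (fun x _ => (Real.hasDerivAt_rpow_const (Or.inr hp)).continuousAt.continuousWithinAt)
    (fun x _ => Real.hasDerivAt_rpow_const (Or.inr hp))
  have hc0 : 0 ≤ c := le_of_lt (lt_of_le_of_lt hb hc.1)
  have hcle : c ^ (p - 1) ≤ a ^ (p - 1) := Real.rpow_le_rpow hc0 hc.2.le (by linarith)
  rw [eq_div_iff (sub_ne_zero.mpr hba.ne')] at hder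
  rw [← hder]
  have hp0 : (0:ℝ) ≤ p := by linarith
  exact mul_le_mul_of_nonneg_right (mul_le_mul_of_nonneg_left hcle hp0)
    (sub_pos.mpr hba).le

private lemma aux_key (T θ : ℝ) (hT : 0 < T) (hθ1 : 0 < θ) (hθ2 : θ ≤ 1) (n i : ℕ)
    (hi1 : 1 ≤ i) (hin : i ≤ n) (t : ℕ → ℝ)
    (ht : ∀ j ≤ n, t j = T * (1 - (1 - (j : ℝ) / n) ^ (1 / θ))) :
    T ^ θ / n ≤ (t i - t (i - 1)) / (T - t (i - 1)) ^ (1 - θ) ∧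
    (t i - t (i - 1)) / (T - t (i - 1)) ^ (1 - θ) ≤ T ^ θ / (θ * n) := by
  have hn0 : 0 < (n : ℝ) := by
    have h1 : 1 ≤ n := hi1.trans hin
    exact_mod_cast Nat.pos_of_ne_zero (by omega)
  set p : ℝ := 1 / θ with hpdef
  have hp0 : 0 < p := by positivity
  have hp1 : 1 ≤ p := (le_div_iff₀ hθ1).mpr (by linarith)
  have hpθ : p * θ = 1 := by rw [hpdef]; field_simp
  set a : ℝ := 1 - ((i : ℝ) - 1) / n with hadef
  set b : ℝ := 1 - (i : ℝ) / n with hbdef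
  have hicast : (1 : ℝ) ≤ (i : ℝ) := by exact_mod_cast hi1
  have hincast : (i : ℝ) ≤ (n : ℝ) := by exact_mod_cast hin
  have ha : 0 < a := by
    rw [hadef, sub_pos, div_lt_one hn0]; linarith
  have hb : 0 ≤ b := by
    rw [hbdef, sub_nonneg, div_le_one hn0]; linarith
  have hab : a - b = 1 / n := by
    rw [hadef, hbdef]; ring
  have hba : b < a := by
    have h01 : (0:ℝ) < 1 / n := by positivity
    rw [hadef, hbdef, sub_lt_sub_iff_left]
    have hq : (i : ℝ) / n - ((i : ℝ) - 1) / n = 1 / n := by ring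
    linarith
  have hti : t i = T * (1 - b ^ p) := ht i hin
  have hti1 : t (i - 1) = T * (1 - a ^ p) := by
    rw [ht (i - 1) (le_trans (Nat.sub_le i 1) hin), Nat.cast_sub hi1]
    norm_num
    exact Or.inl rfl
  have hTt : T - t (i - 1) = T * a ^ p := by rw [hti1]; ring
  have hdiff : t i - t (i - 1) = T * (a ^ p - b ^ p) := by rw [hti, hti1]; ring
  have hexp : p * (1 - θ) = p - 1 := by rw [mul_sub, hpθ]; ring
  have hden : (T * a ^ p) ^ (1 - θ) = T ^ (1 - θ) * a ^ (p - 1) := by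
    rw [Real.mul_rpow hT.le (Real.rpow_nonneg ha.le p), ← Real.rpow_mul ha.le, hexp]
  set A : ℝ := a ^ p - b ^ p with hAdef
  set D : ℝ := a ^ (p - 1) with hDdef
  have hD0 : 0 < D := Real.rpow_pos_of_pos ha (p - 1)
  have hTθ : T ^ θ * T ^ (1 - θ) = T := by
    rw [← Real.rpow_add hT]; norm_num
  have hL : D * (1 / n) ≤ A := by
    rw [← hab]; exact aux_lower a b p hb hba.le ha hp1
  have hU : A ≤ p * D * (1 / n) := by
    rw [← hab]; exact aux_upper a b p hb hba hp1
  have hL' : D ≤ A * n := by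
    have := mul_le_mul_of_nonneg_right hL hn0.le
    calc D = D * (1 / n) * n := by field_simp
      _ ≤ A * n := this
  have hU' : A * (θ * n) ≤ D := by
    have h := mul_le_mul_of_nonneg_right hU (show (0:ℝ) ≤ θ * n by positivity)
    calc A * (θ * n) ≤ p * D * (1 / n) * (θ * n) := h
      _ = (p * θ) * D * ((n : ℝ) * (1 / n)) := by ring
      _ = D := by rw [hpθ, mul_one_div_cancel hn0.ne']; ring
  have hval : (t i - t (i - 1)) / (T - t (i - 1)) ^ (1 - θ)
      = T * A / (T ^ (1 - θ) * D) := by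
    rw [hdiff, hTt, hden]
  rw [hval]
  have hdenpos : 0 < T ^ (1 - θ) * D := by positivity
  have hcollapse : T ^ θ * (T ^ (1 - θ) * D) = T * D := by
    rw [← mul_assoc, hTθ]
  clear_value p a b A D
  constructor
  · rw [div_le_div_iff₀ hn0 hdenpos]
    have h := mul_le_mul_of_nonneg_left hL' hT.le
    linarith [h, hcollapse]
  · rw [div_le_div_iff₀ hdenpos (by positivity : (0:ℝ) < θ * n)]
    have h := mul_le_mul_of_nonneg_left hU' hT.le
    linarith [h, hcollapse]

/-- the adapted time-net `t i = T(1-(1-i/n)^{1/θ})` has `θ`-mesh size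
between `T^θ/n` and `T^θ/(θ n)`. -/
theorem stmt1 (T θ : ℝ) (hT : 0 < T) (hθ : θ ∈ Set.Ioc (0 : ℝ) 1) (n : ℕ) (hn : 1 ≤ n)
    (t : ℕ → ℝ) (ht : ∀ i ≤ n, t i = T * (1 - (1 - (i : ℝ) / n) ^ (1 / θ))) :
    T ^ θ / n ≤
      (Finset.Icc 1 n).sup' (Finset.nonempty_Icc.mpr hn)
        (fun i => (t i - t (i - 1)) / (T - t (i - 1)) ^ (1 - θ)) ∧
    (Finset.Icc 1 n).sup' (Finset.nonempty_Icc.mpr hn)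
        (fun i => (t i - t (i - 1)) / (T - t (i - 1)) ^ (1 - θ)) ≤ T ^ θ / (θ * n) := by
  obtain ⟨hθ1, hθ2⟩ := hθ
  constructor
  · exact (aux_key T θ hT hθ1 hθ2 n 1 le_rfl hn t ht).1.trans
      (Finset.le_sup' (f := fun i => (t i - t (i - 1)) / (T - t (i - 1)) ^ (1 - θ))
        (Finset.mem_Icc.mpr ⟨le_rfl, hn⟩))
  · exact Finset.sup'_le _ _ fun i hi =>
      (aux_key T θ hT hθ1 hθ2 n i (Finset.mem_Icc.mp hi).1 (Finset.mem_Icc.mp hi).2 t ht).2
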